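/- Let n points be drawn i.i.d. uniformly from [0,1], and let V denote the maximum difference between consecutive values in the set of drawn points together with {0, 1}. Then with probability at least 1 − 1/n (for n sufficiently large), V ≤ 6 log n / n. -/

import Mathlib

open MeasureTheory

/-- Maximum spacing of `n` i.i.d. uniform points on `[0,1]`: with probability at least
`1 − 1/n` (for `n` large), the largest gap between consecutive values of the points
together with `{0,1}` is at most `6 log n / n`.  The gap bound `V ≤ g` is expressed
equivalently: every subinterval `(a,b) ⊆ [0,1]` of length `> g` contains one of the
points or an endpoint `0`, `1`. -/
theorem stmt10 :
    ∃ N : ℕ, ∀ n : ℕ, N ≤ n →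
      ENNReal.ofReal (1 - 1 / (n : ℝ)) ≤
      volume {x : Fin n → ℝ | (∀ i, x i ∈ Set.Icc (0:ℝ) 1) ∧
        ∀ a b : ℝ, 0 ≤ a → b ≤ 1 → 6 * Real.log n / n < b - a →
          ∃ s : ℝ, (s = 0 ∨ s = 1 ∨ ∃ i, s = x i) ∧ a < s ∧ s < b} := by
  refine ⟨100, fun n hn => ?_⟩
  have h100 : (100:ℝ) ≤ n := by exact_mod_cast hn
  have hn0 : (0:ℝ) < n := by linarith
  set h : ℝ := 3 * Real.log n / n with hh
  -- basic real facts
  have hlog1 : (1:ℝ) ≤ Real.log n := by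
    rw [Real.le_log_iff_exp_le hn0]
    have h1 : Real.exp 1 < 2.7182818286 := Real.exp_one_lt_d9
    linarith
  have hhpos : 0 < h := by
    apply div_pos (by linarith) hn0
  have hh1 : h ≤ 1 := by
    -- 3 log n ≤ n  since log n = 2 log √n ≤ 2(√n - 1) and 6√n ≤ n for n ≥ 100
    rw [hh, div_le_one hn0]
    have hs : Real.log n = 2 * Real.log (Real.sqrt n) := by
      rw [Real.log_sqrt hn0.le]; ring
    have h1 : Real.log (Real.sqrt n) ≤ Real.sqrt n - 1 :=
      Real.log_le_sub_one_of_pos (Real.sqrt_pos.mpr hn0)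
    have h2 : (10:ℝ) ≤ Real.sqrt n := by
      rw [show (10:ℝ) = Real.sqrt 100 by
        rw [show (100:ℝ) = 10^2 by norm_num, Real.sqrt_sq (by norm_num)]]
      exact Real.sqrt_le_sqrt (by exact_mod_cast hn)
    have h3 : (10:ℝ) * Real.sqrt n ≤ n := by
      nlinarith [Real.sq_sqrt hn0.le]
    nlinarith
  set M : ℕ := ⌊1 / h⌋₊ with hM
  have hMle : (M:ℝ) ≤ 1 / h := Nat.floor_le (by positivity)
  have hMh : (M:ℝ) * h ≤ 1 := by
    rw [← le_div_iff₀ hhpos] at *; exact hMle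
  -- the key numeric bound
  have hkey : (M:ℝ) * (1 - h)^n ≤ 1 / n := by
    have hexp : (1 - h)^n ≤ 1 / (n:ℝ)^3 := by
      have h1 : (1 - h) ≤ Real.exp (-h) := by
        have := Real.add_one_le_exp (-h); linarith
      have h2 : (1 - h)^n ≤ (Real.exp (-h))^n :=
        pow_le_pow_left₀ (by linarith) h1 n
      have h3 : (Real.exp (-h))^n = Real.exp (-(h * n)) := by
        rw [← Real.exp_nat_mul]; ring_nf
      have h4 : h * n = 3 * Real.log n := by
        rw [hh]; field_simp
      have h5 : Real.exp (-(3 * Real.log n)) = 1 / (n:ℝ)^3 := by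
        rw [Real.exp_neg, show (3:ℝ) * Real.log n = (3:ℕ) * Real.log n by norm_num,
          Real.exp_nat_mul, Real.exp_log hn0]
        norm_num
      calc (1 - h)^n ≤ (Real.exp (-h))^n := h2
        _ = 1 / (n:ℝ)^3 := by rw [h3, h4, h5]
    have hMn : (M:ℝ) ≤ n := by
      calc (M:ℝ) ≤ 1 / h := hMle
        _ = n / (3 * Real.log n) := by rw [hh]; field_simp
        _ ≤ n / 3 := by
            apply div_le_div_of_nonneg_left hn0.le (by norm_num) (by linarith)
        _ ≤ n := by linarith
    have hpos : 0 ≤ (1 - h)^n := pow_nonneg (by linarith) n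
    calc (M:ℝ) * (1 - h)^n ≤ n * (1 / (n:ℝ)^3) := by
          apply mul_le_mul hMn hexp hpos hn0.le
      _ = 1 / (n:ℝ)^2 := by field_simp
      _ ≤ 1 / n := by
          apply div_le_div_of_nonneg_left (by norm_num) (by positivity)
          nlinarith [h100]
  -- sets
  set C : Set (Fin n → ℝ) := Set.pi Set.univ (fun _ => Set.Icc (0:ℝ) 1) with hC
  set B : ℕ → Set (Fin n → ℝ) :=
    fun k => Set.pi Set.univ
      (fun _ => Set.Icc (0:ℝ) 1 \ Set.Icc (k * h) ((k + 1) * h)) with hB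
  set S : Set (Fin n → ℝ) := {x : Fin n → ℝ | (∀ i, x i ∈ Set.Icc (0:ℝ) 1) ∧
        ∀ a b : ℝ, 0 ≤ a → b ≤ 1 → 6 * Real.log n / n < b - a →
          ∃ s : ℝ, (s = 0 ∨ s = 1 ∨ ∃ i, s = x i) ∧ a < s ∧ s < b} with hS
  -- cells are inside [0,1]
  have hcell : ∀ k : ℕ, k < M → Set.Icc ((k:ℝ) * h) ((k + 1) * h) ⊆ Set.Icc (0:ℝ) 1 := by
    intro k hk
    apply Set.Icc_subset_Icc (by positivity)
    have : ((k:ℝ) + 1) ≤ M := by exact_mod_cast hk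
    nlinarith
  -- coverage: C minus the union of B's is inside S
  have hcover : C \ (⋃ k ∈ Finset.range M, B k) ⊆ S := by
    rintro x ⟨hxC, hxB⟩
    simp only [Set.mem_iUnion, not_exists] at hxB
    have hxC' : ∀ i, x i ∈ Set.Icc (0:ℝ) 1 := fun i => hxC i (Set.mem_univ i)
    refine ⟨hxC', fun a b ha hb hab => ?_⟩
    set k : ℕ := ⌊a / h⌋₊ + 1 with hk
    have hka : a < k * h := by
      rw [hk]
      have := Nat.lt_floor_add_one (a / h)
      push_cast
      calc a = (a / h) * h := by field_simp
        _ < (⌊a / h⌋₊ + 1 : ℝ) * h := by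
            apply mul_lt_mul_of_pos_right this hhpos
    have hkb : ((k:ℝ) + 1) * h < b := by
      have h1 : (k:ℝ) * h ≤ a + h := by
        rw [hk]
        push_cast
        have := Nat.floor_le (a := a / h) (by positivity)
        calc ((⌊a / h⌋₊:ℝ) + 1) * h ≤ (a / h + 1) * h := by
              apply mul_le_mul_of_nonneg_right (by linarith) hhpos.le
          _ = a + h := by field_simp
      have : 6 * Real.log n / n = 2 * h := by rw [hh]; ring
      rw [this] at hab
      nlinarith [h1, hab]
    have hkM : k < M := by
      have h1 : ((k:ℝ) + 1) ≤ 1 / h := by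
        rw [le_div_iff₀ hhpos]
        nlinarith
      have h2 : k + 1 ≤ M := Nat.le_floor (by exact_mod_cast h1)
      omega
    have : x ∉ B k := hxB k (Finset.mem_range.mpr hkM)
    rw [hB, Set.mem_pi] at this
    push_neg at this
    obtain ⟨i, _, hi⟩ := this
    rw [Set.mem_diff] at hi
    push_neg at hi
    have hxi := hi (hxC' i)
    rw [Set.mem_Icc] at hxi
    refine ⟨x i, Or.inr (Or.inr ⟨i, rfl⟩), by linarith [hxi.1], by linarith [hxi.2]⟩
  -- volume computations
  have hvolC : volume C = 1 := by
    rw [hC, volume_pi_pi]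
    simp [Real.volume_Icc]
  have hvolB : ∀ k : ℕ, k < M → volume (B k) = ENNReal.ofReal ((1 - h)^n) := by
    intro k hk
    rw [hB, volume_pi_pi]
    have hdiff : volume (Set.Icc (0:ℝ) 1 \ Set.Icc ((k:ℝ) * h) ((k + 1) * h))
        = ENNReal.ofReal (1 - h) := by
      rw [measure_diff (hcell k hk) measurableSet_Icc.nullMeasurableSet
        (by rw [Real.volume_Icc]; exact ENNReal.ofReal_ne_top)]
      rw [Real.volume_Icc, Real.volume_Icc]
      have heq : ((k:ℝ) + 1) * h - (k:ℝ) * h = h := by ring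
      rw [heq, ← ENNReal.ofReal_sub _ hhpos.le]
      norm_num
    rw [Finset.prod_congr rfl (fun i _ => hdiff), Finset.prod_const,
      ← ENNReal.ofReal_pow (by linarith)]
    simp
  -- union bound
  have hbound : volume (⋃ k ∈ Finset.range M, B k) ≤ ENNReal.ofReal ((M:ℝ) * (1 - h)^n) := by
    calc volume (⋃ k ∈ Finset.range M, B k)
        ≤ ∑ k ∈ Finset.range M, volume (B k) := measure_biUnion_finset_le _ _
      _ = M * ENNReal.ofReal ((1 - h)^n) := by
          rw [Finset.sum_congr rfl (fun k hk => hvolB k (Finset.mem_range.mp hk))]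
          simp [Finset.sum_const]
      _ = ENNReal.ofReal ((M:ℝ) * (1 - h)^n) := by
          rw [ENNReal.ofReal_mul (by positivity)]
          simp
  -- conclude
  have hsub : volume C ≤ volume S + ENNReal.ofReal ((M:ℝ) * (1 - h)^n) := by
    calc volume C ≤ volume ((C \ (⋃ k ∈ Finset.range M, B k)) ∪ (⋃ k ∈ Finset.range M, B k)) := by
          apply measure_mono
          intro x hx
          by_cases hxB : x ∈ ⋃ k ∈ Finset.range M, B k
          · exact Or.inr hxB
          · exact Or.inl ⟨hx, hxB⟩
      _ ≤ volume (C \ (⋃ k ∈ Finset.range M, B k)) + volume (⋃ k ∈ Finset.range M, B k) :=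
          measure_union_le _ _
      _ ≤ volume S + ENNReal.ofReal ((M:ℝ) * (1 - h)^n) :=
          add_le_add (measure_mono hcover) hbound
  have hfin : ENNReal.ofReal ((M:ℝ) * (1 - h)^n) ≠ ⊤ := ENNReal.ofReal_ne_top
  rw [hvolC] at hsub
  have h1n : 1/(n:ℝ) ≤ 1 := by
    rw [div_le_one hn0]; linarith
  have hM0 : (0:ℝ) ≤ (M:ℝ) * (1 - h)^n :=
    mul_nonneg (Nat.cast_nonneg M) (pow_nonneg (by linarith) n)
  have key : ENNReal.ofReal (1 - 1/(n:ℝ)) + ENNReal.ofReal ((M:ℝ) * (1 - h)^n) ≤ 1 := by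
    rw [← ENNReal.ofReal_add (by linarith) hM0,
      show (1:ENNReal) = ENNReal.ofReal 1 by simp]
    apply ENNReal.ofReal_le_ofReal
    linarith
  have := le_trans key hsub
  exact (ENNReal.add_le_add_iff_right hfin).mp this
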